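/- Let A be the matrix [[3/5, 4/5], [-4/5, 3/5]]. Then the set of powers {Aⁿ : n ∈ ℕ} is dense in SO₂(ℝ). -/

import Mathlib

/-- `SO₂(ℝ)`: real 2×2 matrices of the form `[[a, b], [-b, a]]` with `a² + b² = 1`. -/
def SO2R : Set (Matrix (Fin 2) (Fin 2) ℝ) :=
  {A | A 1 1 = A 0 0 ∧ A 1 0 = -A 0 1 ∧ (A 0 0) ^ 2 + (A 0 1) ^ 2 = 1}

section Aux

open Complex Real

noncomputable def zc : ℂ := 3/5 + 4/5 * Complex.I

lemma zc_re : zc.re = 3/5 := by simp [zc]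
lemma zc_im : zc.im = 4/5 := by simp [zc]

lemma zc_abs : ‖zc‖ = 1 := by
  rw [Complex.norm_def, Complex.normSq_apply, zc_re, zc_im]
  norm_num

lemma zc_ne : zc ≠ 0 := by
  intro h
  have := zc_abs
  rw [h] at this; simp at this

noncomputable def th : ℝ := Complex.arg zc

lemma cos_th : Real.cos th = 3/5 := by
  rw [th, Complex.cos_arg zc_ne, zc_abs, zc_re]
  norm_num

def cseq : ℕ → ℤ
  | 0 => 1
  | 1 => 3
  | (n+2) => 6 * cseq (n+1) - 25 * cseq n

lemma cseq_real : ∀ n : ℕ, (cseq n : ℝ) = 5 ^ n * Real.cos (n * th) := by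
  have key : ∀ n : ℕ, (cseq n : ℝ) = 5 ^ n * Real.cos (n * th) ∧
      (cseq (n+1) : ℝ) = 5 ^ (n+1) * Real.cos ((n+1 : ℕ) * th) := by
    intro n
    induction n with
    | zero => constructor <;> simp [cseq, cos_th] <;> norm_num
    | succ k ih =>
      obtain ⟨ih1, ih2⟩ := ih
      push_cast at ih1 ih2 ⊢
      refine ⟨ih2, ?_⟩
      have hcos : Real.cos (((k:ℝ)+1+1) * th)
          = 2 * Real.cos th * Real.cos (((k:ℝ)+1) * th) - Real.cos ((k:ℝ) * th) := by
        have h1 : ((k:ℝ)+1+1) * th = ((k:ℝ)+1) * th + th := by ring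
        have h2 : ((k:ℝ)) * th = ((k:ℝ)+1) * th - th := by ring
        rw [h1, h2, Real.cos_add, Real.cos_sub]; ring
      have hrec : cseq (k+2) = 6 * cseq (k+1) - 25 * cseq k := rfl
      have : ((cseq (k+1+1) : ℝ)) = 6 * (cseq (k+1) : ℝ) - 25 * (cseq k : ℝ) := by
        rw [hrec]; push_cast; ring
      push_cast at this
      rw [this, hcos, ih1, ih2, cos_th]
      ring
  exact fun n => (key n).1

lemma cseq_mod (n : ℕ) : ((cseq (n+1) : ZMod 5)) = 3 := by
  induction n with
  | zero => rfl
  | succ k ih =>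
    have hrec : cseq (k+2) = 6 * cseq (k+1) - 25 * cseq k := rfl
    have : ((cseq (k+1+1) : ZMod 5)) = 6 * (cseq (k+1) : ZMod 5) - 25 * (cseq k : ZMod 5) := by
      rw [hrec]; push_cast; ring
    rw [this, ih]
    have h25 : (25 : ZMod 5) = 0 := by decide
    rw [h25]
    ring_nf
    decide

lemma cos_ne_one (k : ℕ) : Real.cos (((k+1 : ℕ) : ℝ) * th) ≠ 1 := by
  intro h
  have h1 : ((cseq (k+1) : ℝ)) = 5 ^ (k+1) := by
    rw [cseq_real (k+1), h, mul_one]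
  have h2 : cseq (k+1) = 5 ^ (k+1) := by
    exact_mod_cast h1
  have h3 : ((cseq (k+1) : ZMod 5)) = 0 := by
    rw [h2]; push_cast
    rw [show ((5:ZMod 5)) = 0 by decide]
    simp
  rw [cseq_mod] at h3
  exact absurd h3 (by decide)

noncomputable def Sgrp : AddSubgroup ℝ where
  carrier := {x | ∃ m k : ℤ, x = m * th + k * (2 * Real.pi)}
  zero_mem' := ⟨0, 0, by simp⟩
  add_mem' := by
    rintro a b ⟨m1, k1, rfl⟩ ⟨m2, k2, rfl⟩
    exact ⟨m1 + m2, k1 + k2, by push_cast; ring⟩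
  neg_mem' := by
    rintro a ⟨m, k, rfl⟩
    exact ⟨-m, -k, by push_cast; ring⟩

lemma dense_Sgrp : Dense (Sgrp : Set ℝ) := by
  rcases Sgrp.dense_or_cyclic with h | ⟨a, ha⟩
  · exact h
  · exfalso
    have hth : th ∈ Sgrp := ⟨1, 0, by simp⟩
    have hpi : (2 * Real.pi) ∈ Sgrp := ⟨0, 1, by simp⟩
    rw [ha, AddSubgroup.mem_closure_singleton] at hth hpi
    obtain ⟨m, hm⟩ := hth
    obtain ⟨n, hn⟩ := hpi
    have hn0 : n ≠ 0 := by
      rintro rfl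
      simp at hn
    have key : (n : ℝ) * th = m * (2 * Real.pi) := by
      rw [← hm, ← hn]
      push_cast [zsmul_eq_mul]
      ring
    -- cos (|n| * th) = 1
    have habs : Real.cos ((n.natAbs : ℝ) * th) = 1 := by
      have : ((n.natAbs : ℝ)) = |(n : ℝ)| := by
        rw [Nat.cast_natAbs]; push_cast; rfl
      rw [this]
      rcases abs_cases (n : ℝ) with ⟨h1, _⟩ | ⟨h1, _⟩ <;> rw [h1]
      · rw [key]; exact Real.cos_int_mul_two_pi m
      · rw [neg_mul, Real.cos_neg, key]; exact Real.cos_int_mul_two_pi m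
    have hpos : n.natAbs ≠ 0 := by simpa using hn0
    obtain ⟨k, hk⟩ : ∃ k, n.natAbs = k + 1 := ⟨n.natAbs - 1, by omega⟩
    rw [hk] at habs
    exact cos_ne_one k habs

noncomputable def z0 : Circle := ⟨zc, by
  show zc ∈ Metric.sphere (0:ℂ) 1
  rw [Metric.mem_sphere, dist_zero_right]
  exact zc_abs⟩

lemma z0_exp : Circle.exp th = z0 := by
  have : th = Complex.arg (z0 : ℂ) := rfl
  rw [this, Circle.exp_arg]

lemma circleExp_int_mul (m : ℤ) (t : ℝ) : Circle.exp (m * t) = Circle.exp t ^ m := by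
  induction m using Int.induction_on with
  | zero => simp [Circle.exp_zero]
  | succ k ih =>
    push_cast at ih ⊢
    rw [add_mul, one_mul, Circle.exp_add, ih, zpow_add_one]
  | pred k ih =>
    push_cast at ih ⊢
    rw [sub_mul, one_mul, Circle.exp_sub, ih, zpow_sub_one, div_eq_mul_inv]

lemma dense_zpow : DenseRange (fun m : ℤ => z0 ^ m) := by
  have hsurj : Function.Surjective Circle.exp := fun z => ⟨Complex.arg z, Circle.exp_arg z⟩
  have himg : Dense (Circle.exp '' (Sgrp : Set ℝ)) :=
    hsurj.denseRange.dense_image Circle.exp.continuous dense_Sgrp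
  refine himg.mono ?_
  rintro - ⟨x, ⟨m, k, rfl⟩, rfl⟩
  refine ⟨m, ?_⟩
  simp only
  rw [Circle.exp_add, Circle.exp_int_mul_two_pi, mul_one, circleExp_int_mul, z0_exp]

lemma dense_pow : DenseRange (fun n : ℕ => z0 ^ n) := by
  have := denseRange_zpow_iff_pow (x := z0)
  exact this.mp dense_zpow

def matOf (z : ℂ) : Matrix (Fin 2) (Fin 2) ℝ := !![z.re, z.im; -z.im, z.re]

lemma matOf_mul (z w : ℂ) : matOf (z * w) = matOf z * matOf w := by
  ext i j
  fin_cases i <;> fin_cases j <;>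
    simp [matOf, Matrix.mul_apply, Fin.sum_univ_two, Complex.mul_re, Complex.mul_im] <;> ring

lemma matOf_one : matOf 1 = 1 := by
  ext i j
  fin_cases i <;> fin_cases j <;> simp [matOf, Matrix.one_apply]

lemma matOf_pow (z : ℂ) (n : ℕ) : matOf (z ^ n) = (matOf z) ^ n := by
  induction n with
  | zero => simpa using matOf_one
  | succ k ih => rw [pow_succ, pow_succ, matOf_mul, ih]

lemma matOf_mem (z : Circle) : matOf (z : ℂ) ∈ SO2R := by
  refine ⟨by simp [matOf], by simp [matOf], ?_⟩
  have := Circle.normSq_coe z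
  rw [Complex.normSq_apply] at this
  simp [matOf, ← sq] at this ⊢
  linarith

noncomputable def psi (z : Circle) : SO2R := ⟨matOf (z : ℂ), matOf_mem z⟩

lemma psi_continuous : Continuous psi := by
  refine Continuous.subtype_mk ?_ _
  refine continuous_matrix fun i j => ?_
  fin_cases i <;> fin_cases j <;> simp [matOf] <;>
    fun_prop

lemma psi_surjective : Function.Surjective psi := by
  rintro ⟨B, h1, h2, h3⟩
  refine ⟨⟨B 0 0 + B 0 1 * Complex.I, ?_⟩, ?_⟩
  · show _ ∈ Metric.sphere (0:ℂ) 1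
    rw [Metric.mem_sphere, dist_zero_right, Complex.norm_def,
      Complex.normSq_apply]
    simp [← sq, h3]
  · apply Subtype.ext
    show matOf _ = B
    ext i j
    fin_cases i <;> fin_cases j <;> simp [matOf] <;> simp [h1, h2]


end Aux

/-- The powers of the rotation matrix `[[3/5, 4/5], [-4/5, 3/5]]` form a dense
subset of `SO₂(ℝ)`. -/
theorem powers_of_A_dense_in_SO2R :
    Dense {B : SO2R |
      ∃ n : ℕ, (B : Matrix (Fin 2) (Fin 2) ℝ) = (!![3/5, 4/5; -(4/5), 3/5] : Matrix (Fin 2) (Fin 2) ℝ) ^ n} := by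
  have hA : (!![3/5, 4/5; -(4/5), 3/5] : Matrix (Fin 2) (Fin 2) ℝ) = matOf zc := by
    ext i j
    fin_cases i <;> fin_cases j <;> simp [matOf, zc_re, zc_im, matOf]
  have hdense : Dense (psi '' Set.range (fun n : ℕ => z0 ^ n)) :=
    psi_surjective.denseRange.dense_image psi_continuous dense_pow
  refine hdense.mono ?_
  rintro - ⟨-, ⟨n, rfl⟩, rfl⟩
  refine ⟨n, ?_⟩
  show matOf _ = _
  rw [hA]
  have : ((z0 ^ n : Circle) : ℂ) = (zc) ^ n := by
    push_cast [z0]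
    rfl
  rw [this, matOf_pow]
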